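/- Let R be a Noetherian positively graded ring and M a (not necessarily finitely generated) graded R-module. Then the trace ideal computed using all module homomorphisms equals the ideal generated by images of graded homomorphisms: tr_R(M) = Σ_{φ ∈ Hom^gr_R(M,R)} φ(M), where Hom^gr denotes graded (degree-shifting homogeneous) homomorphisms. -/

import Mathlib

set_option synthInstance.maxHeartbeats 1000000
set_option maxHeartbeats 1000000

open DirectSum

lemma graded_component_exists {R : Type*} [CommRing R]
    (𝒜 : ℤ → AddSubgroup R) [GradedRing 𝒜]
    {M : Type*} [AddCommGroup M] [Module R M]
    (ℳ : ℤ → AddSubgroup M) [DirectSum.Decomposition ℳ]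
    (hgr : ∀ (i j : ℤ), ∀ r ∈ 𝒜 i, ∀ x ∈ ℳ j, r • x ∈ ℳ (i + j))
    (φ : M →ₗ[R] R) (d : ℤ) :
    ∃ ψ : M →ₗ[R] R, (∀ n : ℤ, ∀ x ∈ ℳ n, ψ x ∈ 𝒜 (n + d)) ∧
      (∀ n : ℤ, ∀ x ∈ ℳ n, ψ x = (DirectSum.decompose 𝒜 (φ x) (n + d) : R)) := by
  classical
  set g : ∀ n : ℤ, ℳ n →+ R := fun n =>
    { toFun := fun xn => (DirectSum.decompose 𝒜 (φ (xn : M)) (n + d) : R)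
      map_zero' := by simp
      map_add' := by intro a b; push_cast [map_add]; simp }
  set ψ₀ : M →+ R :=
    (DirectSum.toAddMonoid g).comp (DirectSum.decomposeAddEquiv ℳ).toAddMonoidHom with hψ₀
  have key : ∀ (n : ℤ) (x : M) (hx : x ∈ ℳ n),
      ψ₀ x = (DirectSum.decompose 𝒜 (φ x) (n + d) : R) := by
    intro n x hx
    have : DirectSum.decompose ℳ x = DirectSum.of (fun i => ℳ i) n ⟨x, hx⟩ :=
      DirectSum.decompose_of_mem ℳ hx
    simp only [hψ₀, AddMonoidHom.comp_apply, AddEquiv.coe_toAddMonoidHom,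
      DirectSum.decomposeAddEquiv_apply, this, DirectSum.toAddMonoid_of]
    rfl
  have hsmul : ∀ (r : R) (x : M), ψ₀ (r • x) = r * ψ₀ x := by
    intro r
    induction r using DirectSum.Decomposition.inductionOn 𝒜 with
    | zero => intro x; simp
    | homogeneous a =>
      rename_i i
      intro x
      induction x using DirectSum.Decomposition.inductionOn ℳ with
      | zero => simp
      | homogeneous xm =>
        rename_i n
        have hax : (a : R) • (xm : M) ∈ ℳ (i + n) := hgr i n a a.2 xm xm.2
        rw [key (i + n) _ hax, key n _ xm.2, map_smul, smul_eq_mul,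
          add_assoc, DirectSum.coe_decompose_mul_add_of_left_mem 𝒜 a.2]
      | add y y' hy hy' =>
        rw [smul_add, map_add, hy, hy', map_add, mul_add]
    | add r r' hr hr' =>
      intro x
      rw [add_smul, map_add, hr, hr', add_mul]
  refine ⟨{ toFun := ψ₀, map_add' := ψ₀.map_add,
            map_smul' := fun r x => by rw [RingHom.id_apply, smul_eq_mul]; exact hsmul r x },
    ?_, ?_⟩
  · intro n x hx
    have : ψ₀ x = (DirectSum.decompose 𝒜 (φ x) (n + d) : R) := key n x hx
    show ψ₀ x ∈ 𝒜 (n + d)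
    rw [this]
    exact (DirectSum.decompose 𝒜 (φ x) (n + d)).2
  · exact key

theorem traceIdeal_eq_sup_graded_homs {R : Type*} [CommRing R] [IsNoetherianRing R]
    (𝒜 : ℤ → AddSubgroup R) [GradedRing 𝒜]
    (hpos : ∀ i : ℤ, i < 0 → 𝒜 i = ⊥)
    (M : Type*) [AddCommGroup M] [Module R M]
    (ℳ : ℤ → AddSubgroup M) [DirectSum.Decomposition ℳ]
    (hgr : ∀ (i j : ℤ), ∀ r ∈ 𝒜 i, ∀ x ∈ ℳ j, r • x ∈ ℳ (i + j)) :
    (⨆ φ : M →ₗ[R] R, LinearMap.range φ)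
      = ⨆ (φ : M →ₗ[R] R) (_ : ∃ d : ℤ, ∀ n : ℤ, ∀ x ∈ ℳ n, φ x ∈ 𝒜 (n + d)),
          LinearMap.range φ := by
  classical
  refine le_antisymm (iSup_le fun φ => ?_) (iSup_le fun φ => iSup_le fun _ => le_iSup _ φ)
  intro y hy
  obtain ⟨x, rfl⟩ := hy
  induction x using DirectSum.Decomposition.inductionOn ℳ with
  | zero => simp
  | homogeneous xm =>
    rename_i n
    rw [← DirectSum.sum_support_decompose 𝒜 (φ xm)]
    refine Submodule.sum_mem _ fun m hm => ?_
    obtain ⟨ψ, h1, h2⟩ := graded_component_exists 𝒜 ℳ hgr φ (m - n)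
    have hmn : n + (m - n) = m := by omega
    have : (DirectSum.decompose 𝒜 (φ (xm : M)) m : R) = ψ xm := by
      rw [h2 n xm xm.2, hmn]
    rw [this]
    exact Submodule.mem_iSup_of_mem ψ
      (Submodule.mem_iSup_of_mem ⟨m - n, h1⟩ ⟨xm, rfl⟩)
  | add y y' hy hy' =>
    rw [map_add]
    exact add_mem hy hy'
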